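/- For every dimension n ∈ ℕ and every C > 0 there exists C_N > 0, depending only on n and C, such that for every finite triangulation 𝒯 (of the closure of a bounded open set in ℝⁿ) with shape constant at most C and every T ∈ 𝒯, the number of simplices S ∈ 𝒯 with S ∩ T ≠ ∅ is at most C_N. -/

import Mathlib

open Set MeasureTheory Metric
open scoped ENNReal NNReal

noncomputable section

/-- Euclidean `n`-space. -/
abbrev Euc (n : ℕ) : Type := EuclideanSpace ℝ (Fin n)

/-- A closed affine simplex: the convex hull of an affinely independent tuple. -/
def IsSimplex {n : ℕ} (S : Set (Euc n)) : Prop :=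
  ∃ (k : ℕ) (v : Fin (k + 1) → Euc n),
    AffineIndependent ℝ v ∧ S = convexHull ℝ (Set.range v)

/-- `S` is a (sub)simplex (face) of the simplex `T`: `T` is the convex hull of an
affinely independent tuple and `S` is the convex hull of a nonempty subfamily of
the vertices. -/
def IsFaceOf {n : ℕ} (S T : Set (Euc n)) : Prop :=
  ∃ (k : ℕ) (v : Fin (k + 1) → Euc n), AffineIndependent ℝ v ∧
    T = convexHull ℝ (Set.range v) ∧
    ∃ s : Set (Fin (k + 1)), s.Nonempty ∧ S = convexHull ℝ (v '' s)

/-- A finite triangulation of the set `X`: a finite family of simplices covering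
`X`, closed under taking faces, such that any two members intersect in a common
face (or not at all). -/
def IsTriangulation {n : ℕ} (𝒯 : Finset (Set (Euc n))) (X : Set (Euc n)) : Prop :=
  (∀ S ∈ 𝒯, IsSimplex S) ∧
  (⋃ S ∈ 𝒯, S) = X ∧
  (∀ T ∈ 𝒯, ∀ S : Set (Euc n), IsFaceOf S T → S ∈ 𝒯) ∧
  (∀ S ∈ 𝒯, ∀ T ∈ 𝒯, S ∩ T = ∅ ∨ (IsFaceOf (S ∩ T) S ∧ IsFaceOf (S ∩ T) T))

/-- The dimension of a simplex (of any subset of `ℝⁿ`). -/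
def simplexDim {n : ℕ} (S : Set (Euc n)) : ℕ :=
  Module.finrank ℝ (vectorSpan ℝ S)

/- The mesh size `h_F` of a simplex `F` of the triangulation `𝒯`: its diameter if
`dim F ≥ 1`, and for a vertex the average diameter of the `n`-simplices containing
it. -/
open Classical in
def meshSize {n : ℕ} (𝒯 : Finset (Set (Euc n))) (F : Set (Euc n)) : ℝ :=
  if simplexDim F = 0 then
    (∑ T ∈ 𝒯.filter (fun T => simplexDim T = n ∧ F ⊆ T), Metric.diam T) /
      ((𝒯.filter (fun T => simplexDim T = n ∧ F ⊆ T)).card : ℝ)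
  else Metric.diam F

/-- `C` is an (upper bound for the) shape constant of the triangulation `𝒯`:
`h_T ^ n ≤ C · |T|` for `n`-simplices, and `h_T ≤ C · h_S` for intersecting
simplices. -/
def ShapeRegular {n : ℕ} (𝒯 : Finset (Set (Euc n))) (C : ℝ) : Prop :=
  (∀ T ∈ 𝒯, simplexDim T = n → meshSize 𝒯 T ^ n ≤ C * (volume T).toReal) ∧
  (∀ T ∈ 𝒯, ∀ S ∈ 𝒯, (S ∩ T).Nonempty → meshSize 𝒯 T ≤ C * meshSize 𝒯 S)

/-! ### Auxiliary lemmas -/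

/-- Membership in the convex hull of a finite range, in terms of convex combinations. -/
lemma mem_hull_range_iff {n : ℕ} {ι : Type} [Fintype ι] (v : ι → Euc n) (x : Euc n) :
    x ∈ convexHull ℝ (Set.range v) ↔
      ∃ w : ι → ℝ, (∀ i, 0 ≤ w i) ∧ ∑ i, w i = 1 ∧ ∑ i, w i • v i = x := by
  classical
  rw [convexHull_range_eq_exists_affineCombination]
  constructor
  · rintro ⟨s, w, hw0, hw1, rfl⟩
    refine ⟨Set.indicator ↑s w, ?_, ?_, ?_⟩
    · intro i
      by_cases h : i ∈ s
      · simpa [Set.indicator_apply, h] using hw0 i h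
      · simp [Set.indicator_apply, h]
    · rw [show ∑ i, (↑s : Set ι).indicator w i = ∑ i ∈ s, w i by
        simp only [Set.indicator_apply, Finset.mem_coe]; rw [Fintype.sum_extend_by_zero]]
      exact hw1
    · have hs1 : ∑ i, (↑s : Set ι).indicator w i = 1 := by
        rw [show ∑ i, (↑s : Set ι).indicator w i = ∑ i ∈ s, w i by
          simp only [Set.indicator_apply, Finset.mem_coe]; rw [Fintype.sum_extend_by_zero]]
        exact hw1
      rw [Finset.affineCombination_indicator_subset w v s.subset_univ,
        Finset.affineCombination_eq_linear_combination _ v _ hs1]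
  · rintro ⟨w, hw0, hw1, rfl⟩
    exact ⟨Finset.univ, w, fun i _ => hw0 i, hw1,
      Finset.affineCombination_eq_linear_combination _ v w hw1⟩

/-- The convex hull of at most `n` points in `ℝⁿ` has measure zero. -/
lemma vol_hull_null {n : ℕ} (t : Finset (Euc n)) (h : t.card ≤ n) :
    volume (convexHull ℝ (↑t : Set (Euc n))) = 0 := by
  classical
  rcases t.eq_empty_or_nonempty with rfl | hne
  · simp
  · have hcard : t.card = (t.card - 1) + 1 := (Nat.succ_pred_eq_of_pos (Finset.card_pos.2 hne)).symm
    have hfr : Module.finrank ℝ (vectorSpan ℝ (↑t : Set (Euc n))) ≤ t.card - 1 := by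
      have := finrank_vectorSpan_image_finset_le ℝ (id : Euc n → Euc n) t hcard
      rwa [Finset.image_id] at this
    have hne' : affineSpan ℝ (↑t : Set (Euc n)) ≠ ⊤ := by
      intro htop
      have : vectorSpan ℝ (↑t : Set (Euc n)) = ⊤ := by
        rw [← direction_affineSpan, htop, AffineSubspace.direction_top]
      rw [this, finrank_top] at hfr
      have : n ≤ t.card - 1 := by simpa [finrank_euclideanSpace_fin] using hfr
      omega
    exact measure_mono_null (convexHull_subset_affineSpan _)
      (MeasureTheory.Measure.addHaar_affineSubspace _ _ hne')

lemma vectorSpan_convexHull {n : ℕ} (s : Set (Euc n)) :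
    vectorSpan ℝ (convexHull ℝ s) = vectorSpan ℝ s := by
  rw [← direction_affineSpan, affineSpan_convexHull, direction_affineSpan]

lemma simplexDim_hull {n k : ℕ} (v : Fin (k + 1) → Euc n) (hv : AffineIndependent ℝ v) :
    simplexDim (convexHull ℝ (Set.range v)) = k := by
  rw [simplexDim, vectorSpan_convexHull]
  exact hv.finrank_vectorSpan (Fintype.card_fin _)

lemma simplexDim_le {n k : ℕ} (v : Fin (k + 1) → Euc n) (hv : AffineIndependent ℝ v) : k ≤ n := by
  have h1 := hv.finrank_vectorSpan (Fintype.card_fin _)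
  have h2 : Module.finrank ℝ (vectorSpan ℝ (Set.range v)) ≤ Module.finrank ℝ (Euc n) :=
    Submodule.finrank_le _
  rw [h1, finrank_euclideanSpace_fin] at h2
  exact h2

lemma pos_weight_mem_of_isExtreme {n : ℕ} {A F : Set (Euc n)} (hA : Convex ℝ A)
    (hext : IsExtreme ℝ A F) {ι : Type} [Fintype ι] (w : ι → ℝ) (p : ι → Euc n)
    (hw0 : ∀ i, 0 ≤ w i) (hw1 : ∑ i, w i = 1) (hp : ∀ i, p i ∈ A)
    (hx : ∑ i, w i • p i ∈ F) : ∀ i, 0 < w i → p i ∈ F := by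
  classical
  intro i hwi
  have hsum_le : w i ≤ 1 := hw1 ▸ Finset.single_le_sum (fun j _ => hw0 j) (Finset.mem_univ i)
  have hsplitw := Finset.add_sum_erase Finset.univ w (Finset.mem_univ i)
  rw [hw1] at hsplitw
  have hsplit := Finset.add_sum_erase Finset.univ (fun j => w j • p j) (Finset.mem_univ i)
  rcases eq_or_lt_of_le hsum_le with heq | hlt
  · have hrest : ∑ j ∈ Finset.univ.erase i, w j = 0 := by linarith
    have hzero : ∀ j ∈ Finset.univ.erase i, w j = 0 :=
      (Finset.sum_eq_zero_iff_of_nonneg (fun j _ => hw0 j)).1 hrest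
    have : ∑ j, w j • p j = p i := by
      rw [← hsplit, Finset.sum_eq_zero (fun j hj => by rw [hzero j hj, zero_smul]), add_zero]
      simp [heq]
    rwa [this] at hx
  · have hb : (0:ℝ) < 1 - w i := by linarith
    have hrest : ∑ j ∈ Finset.univ.erase i, w j = 1 - w i := by linarith
    set y := (1 - w i)⁻¹ • ∑ j ∈ Finset.univ.erase i, w j • p j with hy
    have hyA : y ∈ A := by
      have hc : (Finset.univ.erase i).centerMass w p ∈ convexHull ℝ A :=
        Finset.centerMass_mem_convexHull (Finset.univ.erase i)
          (fun j _ => hw0 j) (by rw [hrest]; exact hb) (fun j _ => hp j)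
      rw [hA.convexHull_eq] at hc
      rwa [Finset.centerMass, hrest] at hc
    have hseg : ∑ j, w j • p j ∈ openSegment ℝ (p i) y := by
      refine ⟨w i, 1 - w i, hwi, hb, by ring, ?_⟩
      rw [hy, smul_inv_smul₀ (ne_of_gt hb)]
      exact hsplit
    exact hext.2 (hp i) hyA hx hseg

/-- The convex hull of a subfamily of an affinely independent family is an extreme
subset of the hull of the whole family. -/
lemma face_isExtreme {n k : ℕ} {v : Fin (k + 1) → Euc n} (hv : AffineIndependent ℝ v)
    (s : Set (Fin (k + 1))) :
    IsExtreme ℝ (convexHull ℝ (Set.range v)) (convexHull ℝ (v '' s)) := by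
  classical
  constructor
  · exact convexHull_mono (Set.image_subset_range v s)
  · rintro x₁ hx₁ x₂ hx₂ x hx ⟨a, b, ha, hb, hab, hxeq⟩
    obtain ⟨w₁, hw₁0, hw₁1, hw₁⟩ := (mem_hull_range_iff v x₁).1 hx₁
    obtain ⟨w₂, hw₂0, hw₂1, hw₂⟩ := (mem_hull_range_iff v x₂).1 hx₂
    haveI : Fintype ↥s := Fintype.ofFinite _
    have hximg : x ∈ convexHull ℝ (Set.range (fun j : s => v ↑j)) := by
      rw [Set.image_eq_range] at hx; exact hx
    obtain ⟨u', hu'0, hu'1, hu'⟩ := (mem_hull_range_iff (fun j : s => v ↑j) x).1 hximg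
    set u : Fin (k + 1) → ℝ := fun i => if h : i ∈ s then u' ⟨i, h⟩ else 0 with hu_def
    have hu_off : ∀ i, i ∉ s → u i = 0 := fun i hi => dif_neg hi
    have hu_on : ∀ j : ↥s, u ↑j = u' j := fun j => by
      rw [hu_def]; simp only [j.2, dif_pos, Subtype.coe_eta]
    have husum : ∑ i, u i = 1 := by
      rw [← Finset.sum_subset s.toFinset.subset_univ
        (fun i _ hi => hu_off i (by rwa [Set.mem_toFinset] at hi)),
        Finset.sum_subtype s.toFinset (fun x => Set.mem_toFinset) u]
      rw [← hu'1]
      exact Finset.sum_congr rfl fun j _ => hu_on j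
    have huvec : ∑ i, u i • v i = x := by
      rw [← Finset.sum_subset s.toFinset.subset_univ
        (fun i _ hi => by rw [hu_off i (by rwa [Set.mem_toFinset] at hi), zero_smul]),
        Finset.sum_subtype s.toFinset (fun x => Set.mem_toFinset) (fun i => u i • v i)]
      rw [← hu']
      exact Finset.sum_congr rfl fun j _ => by rw [hu_on j]
    -- the weights of `x` as a combination of `x₁, x₂`
    set W : Fin (k + 1) → ℝ := fun i => a * w₁ i + b * w₂ i with hW_def
    have hWsum : ∑ i, W i = 1 := by
      rw [hW_def]
      simp only [Finset.sum_add_distrib, ← Finset.mul_sum, hw₁1, hw₂1]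
      simpa using hab
    have hWvec : ∑ i, W i • v i = x := by
      rw [hW_def]
      simp only [add_smul, mul_smul, Finset.sum_add_distrib, ← Finset.smul_sum, hw₁, hw₂]
      exact hxeq
    have huniq : W = u := by
      refine (affineIndependent_iff_eq_of_fintype_affineCombination_eq ℝ v).1 hv W u hWsum husum ?_
      rw [Finset.affineCombination_eq_linear_combination _ v W hWsum,
        Finset.affineCombination_eq_linear_combination _ v u husum, hWvec, huvec]
    have hzero : ∀ i, i ∉ s → w₁ i = 0 ∧ w₂ i = 0 := by
      intro i hi
      have h0 : a * w₁ i + b * w₂ i = 0 := by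
        have := congrFun huniq i
        rw [hu_off i hi] at this
        exact this
      have h1 : 0 ≤ a * w₁ i := mul_nonneg ha.le (hw₁0 i)
      have h2 : 0 ≤ b * w₂ i := mul_nonneg hb.le (hw₂0 i)
      constructor
      · have : a * w₁ i = 0 := by linarith
        exact (mul_eq_zero.1 this).resolve_left ha.ne'
      · have : b * w₂ i = 0 := by linarith
        exact (mul_eq_zero.1 this).resolve_left hb.ne'
    -- conclude membership of the endpoints
    have hmem : ∀ w : Fin (k + 1) → ℝ, (∀ i, 0 ≤ w i) → ∑ i, w i = 1 →
        (∀ i, i ∉ s → w i = 0) → ∑ i, w i • v i ∈ convexHull ℝ (v '' s) := by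
      intro w hw0 hw1 hwoff
      have hsum' : ∑ i ∈ s.toFinset, w i = 1 := by
        rw [Finset.sum_subset s.toFinset.subset_univ
          (fun i _ hi => hwoff i (by rwa [Set.mem_toFinset] at hi))]
        exact hw1
      have hvecsum : ∑ i, w i • v i = s.toFinset.centerMass w v := by
        rw [Finset.centerMass_eq_of_sum_1 _ _ hsum']
        exact (Finset.sum_subset s.toFinset.subset_univ
          (fun i _ hi => by rw [hwoff i (by rwa [Set.mem_toFinset] at hi), zero_smul])).symm
      rw [hvecsum]
      exact Finset.centerMass_mem_convexHull s.toFinset (fun i _ => hw0 i)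
        (by rw [hsum']; norm_num) (fun i hi => ⟨i, Set.mem_toFinset.1 hi, rfl⟩)
    · rw [← hw₁]
      exact hmem w₁ hw₁0 hw₁1 (fun i hi => (hzero i hi).1)

/-- An extreme subset of a simplex which is convex equals the hull of the vertices
it contains. -/
lemma isExtreme_eq_hull {n k : ℕ} {w : Fin (k + 1) → Euc n} (hw : AffineIndependent ℝ w)
    {F : Set (Euc n)} (hF : Convex ℝ F)
    (hext : IsExtreme ℝ (convexHull ℝ (Set.range w)) F) :
    F = convexHull ℝ (w '' {i | w i ∈ F}) := by
  classical
  apply Set.Subset.antisymm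
  · intro x hxF
    obtain ⟨u, hu0, hu1, hu⟩ := (mem_hull_range_iff w x).1 (hext.1 hxF)
    have hvert : ∀ i, 0 < u i → w i ∈ F := by
      intro i hi
      refine pos_weight_mem_of_isExtreme (convex_convexHull ℝ _) hext u w hu0 hu1
        (fun j => subset_convexHull ℝ _ (Set.mem_range_self j)) (by rw [hu]; exact hxF) i hi
    have hsum' : ∑ i ∈ Finset.univ.filter (fun i => 0 < u i), u i = 1 := by
      rw [Finset.sum_filter_of_ne (fun i _ hne => lt_of_le_of_ne (hu0 i) (Ne.symm hne))]
      exact hu1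
    have hx' : x = (Finset.univ.filter (fun i => 0 < u i)).centerMass u w := by
      rw [Finset.centerMass_eq_of_sum_1 _ _ hsum', ← hu]
      exact (Finset.sum_filter_of_ne (fun i _ hne => by
        rcases (hu0 i).eq_or_lt with h | h
        · exact absurd (by rw [← h, zero_smul]) hne
        · exact h)).symm
    rw [hx']
    refine Finset.centerMass_mem_convexHull _ (fun i _ => hu0 i) (by rw [hsum']; norm_num) ?_
    intro i hi
    exact ⟨i, hvert i (Finset.mem_filter.1 hi).2, rfl⟩
  · exact convexHull_min (fun y ⟨i, hi, hiy⟩ => hiy ▸ hi) hF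

/-- A simplex of dimension zero is a single point. -/
lemma simplex_dim_zero_singleton {n : ℕ} {S : Set (Euc n)} (hS : IsSimplex S)
    (hdim : simplexDim S = 0) : ∃ p, S = {p} := by
  obtain ⟨k, v, hv, rfl⟩ := hS
  have hk : k = 0 := by rw [simplexDim_hull v hv] at hdim; exact hdim
  subst hk
  refine ⟨v 0, ?_⟩
  have : Set.range v = {v 0} := by
    ext y; constructor
    · rintro ⟨i, rfl⟩; rw [show i = 0 from Fin.eq_of_val_eq (by omega)]; rfl
    · rintro rfl; exact ⟨0, rfl⟩
  rw [this, convexHull_singleton]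

lemma simplex_closed {n : ℕ} {S : Set (Euc n)} (hS : IsSimplex S) : IsClosed S := by
  obtain ⟨k, v, hv, rfl⟩ := hS
  exact ((Set.finite_range v).isCompact_convexHull ℝ).isClosed

lemma simplex_compact {n : ℕ} {S : Set (Euc n)} (hS : IsSimplex S) : IsCompact S := by
  obtain ⟨k, v, hv, rfl⟩ := hS
  exact (Set.finite_range v).isCompact_convexHull ℝ

lemma simplex_nonempty {n : ℕ} {S : Set (Euc n)} (hS : IsSimplex S) : S.Nonempty := by
  obtain ⟨k, v, hv, rfl⟩ := hS
  exact (Set.range_nonempty v).convexHull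

lemma simplex_convex {n : ℕ} {S : Set (Euc n)} (hS : IsSimplex S) : Convex ℝ S := by
  obtain ⟨k, v, hv, rfl⟩ := hS
  exact convex_convexHull ℝ _

/-- A simplex of positive dimension has positive diameter. -/
lemma simplex_diam_pos {n : ℕ} {S : Set (Euc n)} (hS : IsSimplex S)
    (hdim : simplexDim S ≠ 0) : 0 < Metric.diam S := by
  obtain ⟨k, v, hv, rfl⟩ := hS
  rw [simplexDim_hull v hv] at hdim
  have hk : 1 ≤ k := Nat.one_le_iff_ne_zero.2 hdim
  have h01 : (0 : Fin (k + 1)) ≠ (1 : Fin (k + 1)) := by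
    intro h
    have := congrArg Fin.val h
    simp [Fin.val_one', Nat.mod_eq_of_lt (by omega : 1 < k + 1)] at this
  have hne : v 0 ≠ v 1 := fun h => h01 (hv.injective h)
  have hbd : Bornology.IsBounded (convexHull ℝ (Set.range v)) :=
    ((Set.finite_range v).isCompact_convexHull ℝ).isBounded
  have h0 : v 0 ∈ convexHull ℝ (Set.range v) := subset_convexHull ℝ _ ⟨0, rfl⟩
  have h1 : v 1 ∈ convexHull ℝ (Set.range v) := subset_convexHull ℝ _ ⟨1, rfl⟩
  calc (0:ℝ) < dist (v 0) (v 1) := dist_pos.2 hne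
    _ ≤ Metric.diam (convexHull ℝ (Set.range v)) := Metric.dist_le_diam_of_mem hbd h0 h1

lemma meshSize_nonneg {n : ℕ} (𝒯 : Finset (Set (Euc n))) (F : Set (Euc n)) :
    0 ≤ meshSize 𝒯 F := by
  rw [meshSize]
  split
  · exact div_nonneg (Finset.sum_nonneg fun T _ => Metric.diam_nonneg) (Nat.cast_nonneg _)
  · exact Metric.diam_nonneg

lemma meshSize_of_dim_ne {n : ℕ} (𝒯 : Finset (Set (Euc n))) {F : Set (Euc n)}
    (h : simplexDim F ≠ 0) : meshSize 𝒯 F = Metric.diam F := by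
  rw [meshSize, if_neg h]

/-- A face of a simplex of dimension `n` in `ℝⁿ` is either the whole simplex or
has measure zero. -/
lemma face_vol_zero_or_eq {n : ℕ} {F Q : Set (Euc n)} (hdim : simplexDim Q = n)
    (hf : IsFaceOf F Q) : volume F = 0 ∨ F = Q := by
  classical
  obtain ⟨k, v, hv, hQ, r, hrne, hF⟩ := hf
  have hk : k = n := by rw [hQ, simplexDim_hull v hv] at hdim; exact hdim
  subst hk
  by_cases hcard : r.toFinset.card = k + 1
  · right
    have hrall : r.toFinset = Finset.univ :=
      Finset.eq_univ_of_card _ (by rw [hcard, Fintype.card_fin])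
    have : r = Set.univ := by
      ext i; simp only [Set.mem_univ, iff_true]
      rw [← Set.mem_toFinset, hrall]; exact Finset.mem_univ i
    rw [hF, this, Set.image_univ, ← hQ]
  · left
    have hle : r.toFinset.card ≤ k := by
      have h1 := r.toFinset.card_le_univ
      have h2 : Fintype.card (Fin (k + 1)) = k + 1 := Fintype.card_fin _
      omega
    have himg : v '' r = ↑(r.toFinset.image v) := by
      rw [Finset.coe_image, Set.coe_toFinset]
    rw [hF, himg]
    exact vol_hull_null _ ((Finset.card_image_le).trans hle)

/-- An (arbitrarily chosen) affinely independent tuple of vertices for a full-dimensional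
simplex. -/
def vertsAux (n : ℕ) (P : Set (Euc n)) : Fin (n + 1) → Euc n :=
  have := Classical.propDecidable
  if h : ∃ w : Fin (n + 1) → Euc n, AffineIndependent ℝ w ∧ P = convexHull ℝ (Set.range w) then
    h.choose else fun _ => 0

lemma vertsAux_spec {n : ℕ} {P : Set (Euc n)}
    (h : ∃ w : Fin (n + 1) → Euc n, AffineIndependent ℝ w ∧ P = convexHull ℝ (Set.range w)) :
    AffineIndependent ℝ (vertsAux n P) ∧ P = convexHull ℝ (Set.range (vertsAux n P)) := by
  rw [vertsAux, dif_pos h]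
  exact h.choose_spec

open Classical in
theorem neighbor_count_bound (n : ℕ) (C : ℝ) (hC : 0 < C) :
    ∃ CN : ℝ, 0 < CN ∧
      ∀ Ω : Set (Euc n), IsOpen Ω → Bornology.IsBounded Ω →
      ∀ 𝒯 : Finset (Set (Euc n)), IsTriangulation 𝒯 (closure Ω) →
        ShapeRegular 𝒯 C →
        ∀ T ∈ 𝒯, ((𝒯.filter (fun S => (S ∩ T).Nonempty)).card : ℝ) ≤ CN := by
  classical
  set B : ℝ := (volume (Metric.ball (0 : Euc n) 1)).toReal with hB
  refine ⟨max 1 ((C ^ (n + 1) * (C + 1) ^ n * B) * 2 ^ (n + 1)),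
    lt_of_lt_of_le zero_lt_one (le_max_left _ _), ?_⟩
  intro Ω hΩopen hΩbd 𝒯 htri hshape T hT
  obtain ⟨hsimp, hcover, hface, hinter⟩ := htri
  obtain ⟨hshape1, hshape2⟩ := hshape
  -- the `n = 0` case is trivial: the whole space is a single point
  by_cases hn0 : n = 0
  · subst hn0
    have hsub : ∀ x y : Euc 0, x = y := fun x y => by ext i; exact i.elim0
    have hcard : (𝒯.filter (fun S => (S ∩ T).Nonempty)).card ≤ 1 := by
      refine Finset.card_le_one.mpr (fun a ha b hb => ?_)
      have ha' := simplex_nonempty (hsimp a (Finset.mem_filter.1 ha).1)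
      have hb' := simplex_nonempty (hsimp b (Finset.mem_filter.1 hb).1)
      obtain ⟨x, hx⟩ := ha'
      obtain ⟨y, hy⟩ := hb'
      apply Set.eq_of_subset_of_subset
      · intro z hz; rw [hsub z y]; exact hy
      · intro z hz; rw [hsub z x]; exact hx
    calc ((𝒯.filter (fun S => (S ∩ T).Nonempty)).card : ℝ) ≤ 1 := by exact_mod_cast hcard
      _ ≤ _ := le_max_left _ _
  have hn : 0 < n := Nat.pos_of_ne_zero hn0
  -- degenerate case: `meshSize T = 0`
  rcases (meshSize_nonneg 𝒯 T).eq_or_lt with h0 | hpos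
  · have hsub : 𝒯.filter (fun S => (S ∩ T).Nonempty) ⊆ {T} := by
      intro S hS
      rw [Finset.mem_filter] at hS
      obtain ⟨hSmem, hSint⟩ := hS
      have hms_S : meshSize 𝒯 S ≤ C * meshSize 𝒯 T :=
        hshape2 S hSmem T hT (by rwa [Set.inter_comm])
      rw [← h0, mul_zero] at hms_S
      have hms0 : meshSize 𝒯 S = 0 := le_antisymm hms_S (meshSize_nonneg 𝒯 S)
      have hdimS : simplexDim S = 0 := by
        by_contra hne
        rw [meshSize_of_dim_ne 𝒯 hne] at hms0
        exact absurd hms0 (simplex_diam_pos (hsimp S hSmem) hne).ne'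
      have hdimT : simplexDim T = 0 := by
        by_contra hne
        rw [meshSize_of_dim_ne 𝒯 hne] at h0
        exact absurd h0.symm (simplex_diam_pos (hsimp T hT) hne).ne'
      obtain ⟨p, hp⟩ := simplex_dim_zero_singleton (hsimp S hSmem) hdimS
      obtain ⟨q, hq⟩ := simplex_dim_zero_singleton (hsimp T hT) hdimT
      obtain ⟨x, hxS, hxT⟩ := hSint
      rw [hp] at hxS; rw [hq] at hxT
      have hpq : p = q := (Set.mem_singleton_iff.1 hxS).symm.trans (Set.mem_singleton_iff.1 hxT)
      rw [Finset.mem_singleton, hp, hq, hpq]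
    calc ((𝒯.filter (fun S => (S ∩ T).Nonempty)).card : ℝ)
        ≤ 1 := by
          have h := Finset.card_le_card hsub
          rw [Finset.card_singleton] at h
          exact_mod_cast h
      _ ≤ _ := le_max_left _ _
  -- main case
  set h := meshSize 𝒯 T with hh
  obtain ⟨t0, ht0⟩ := simplex_nonempty (hsimp T hT)
  have hms_loT : ∀ S ∈ 𝒯, (S ∩ T).Nonempty → h ≤ C * meshSize 𝒯 S :=
    fun S hS hint => hshape2 T hT S hS hint
  have hms_upT : ∀ S ∈ 𝒯, (S ∩ T).Nonempty → meshSize 𝒯 S ≤ C * h :=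
    fun S hS hint => hshape2 S hS T hT (by rwa [Set.inter_comm])
  have hdiam_up : ∀ S ∈ 𝒯, (S ∩ T).Nonempty → Metric.diam S ≤ C * h := by
    intro S hS hint
    by_cases hd : simplexDim S = 0
    · obtain ⟨p, hp⟩ := simplex_dim_zero_singleton (hsimp S hS) hd
      rw [hp, Metric.diam_singleton]
      exact mul_nonneg hC.le hpos.le
    · rw [← meshSize_of_dim_ne 𝒯 hd]
      exact hms_upT S hS hint
  have hdiamT : Metric.diam T ≤ h := by
    by_cases hd : simplexDim T = 0
    · obtain ⟨p, hp⟩ := simplex_dim_zero_singleton (hsimp T hT) hd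
      rw [hp, Metric.diam_singleton]
      exact hpos.le
    · rw [hh, meshSize_of_dim_ne 𝒯 hd]
  have hsub_ball : ∀ S ∈ 𝒯, (S ∩ T).Nonempty → S ⊆ Metric.closedBall t0 ((C + 1) * h) := by
    intro S hS hint y hy
    obtain ⟨z, hzS, hzT⟩ := hint
    rw [Metric.mem_closedBall]
    have h1 : dist y z ≤ Metric.diam S :=
      Metric.dist_le_diam_of_mem (simplex_compact (hsimp S hS)).isBounded hy hzS
    have h2 : dist z t0 ≤ Metric.diam T :=
      Metric.dist_le_diam_of_mem (simplex_compact (hsimp T hT)).isBounded hzT ht0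
    calc dist y t0 ≤ dist y z + dist z t0 := dist_triangle _ _ _
      _ ≤ C * h + h := add_le_add (h1.trans (hdiam_up S hS ⟨z, hzS, hzT⟩)) (h2.trans hdiamT)
      _ = (C + 1) * h := by ring
  -- low-dimensional members are null
  have hlow : ∀ S ∈ 𝒯, simplexDim S ≠ n → volume S = 0 := by
    intro S hS hd
    obtain ⟨k, v, hv, rfl⟩ := hsimp S hS
    have hk : k ≠ n := by rwa [simplexDim_hull v hv] at hd
    have hkle : k ≤ n := simplexDim_le v hv
    have himg : Set.range v = ↑(Finset.univ.image v) := by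
      rw [Finset.coe_image, Finset.coe_univ, Set.image_univ]
    rw [himg]
    refine vol_hull_null _ ?_
    calc (Finset.univ.image v).card ≤ (Finset.univ : Finset (Fin (k + 1))).card :=
          Finset.card_image_le
      _ = k + 1 := by rw [Finset.card_univ, Fintype.card_fin]
      _ ≤ n := by omega
  -- every point of the triangulated set lies in an `n`-dimensional member
  have hcoverN : ∀ x ∈ closure Ω, ∃ P ∈ 𝒯, simplexDim P = n ∧ x ∈ P := by
    intro x hx
    by_contra hcon
    push_neg at hcon
    set U : Set (Euc n) := ⋃ P ∈ 𝒯.filter (fun P => simplexDim P = n), P with hU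
    have hUclosed : IsClosed U := by
      refine Set.Finite.isClosed_biUnion (Finset.finite_toSet _) (fun P hP => ?_)
      exact simplex_closed (hsimp P (Finset.mem_filter.1 hP).1)
    have hxU : x ∉ U := by
      intro hmem
      rw [hU, Set.mem_iUnion₂] at hmem
      obtain ⟨P, hP, hxP⟩ := hmem
      rw [Finset.mem_filter] at hP
      exact hcon P hP.1 hP.2 hxP
    obtain ⟨ε, hε, hball⟩ := Metric.isOpen_iff.1 hUclosed.isOpen_compl x hxU
    obtain ⟨z, hzΩ, hzd⟩ := Metric.mem_closure_iff.1 hx ε hε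
    obtain ⟨δ, hδ, hδsub⟩ := Metric.isOpen_iff.1 hΩopen z hzΩ
    set r := min δ (ε - dist x z) with hr
    have hrpos : 0 < r := lt_min hδ (by linarith)
    have hsubΩ : Metric.ball z r ⊆ Ω := fun y hy =>
      hδsub (Metric.mem_ball.2 (lt_of_lt_of_le (Metric.mem_ball.1 hy) (min_le_left _ _)))
    have hsubε : Metric.ball z r ⊆ Metric.ball x ε := by
      intro y hy
      rw [Metric.mem_ball] at hy ⊢
      have h1 : dist y x ≤ dist y z + dist z x := dist_triangle _ _ _
      have h2 : dist y z < ε - dist x z := lt_of_lt_of_le hy (min_le_right _ _)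
      have h3 : dist z x = dist x z := dist_comm z x
      linarith
    have hsublow : Metric.ball z r ⊆ ⋃ S ∈ 𝒯.filter (fun S => simplexDim S ≠ n), S := by
      intro y hy
      have hyΩ : y ∈ closure Ω := subset_closure (hsubΩ hy)
      rw [← hcover, Set.mem_iUnion₂] at hyΩ
      obtain ⟨S, hS, hyS⟩ := hyΩ
      by_cases hd : simplexDim S = n
      · exact absurd (Set.mem_biUnion (Finset.mem_filter.2 ⟨hS, hd⟩) hyS) (hball (hsubε hy))
      · exact Set.mem_biUnion (Finset.mem_filter.2 ⟨hS, hd⟩) hyS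
    have hvol0 : volume (⋃ S ∈ 𝒯.filter (fun S => simplexDim S ≠ n), S) = 0 := by
      refine le_antisymm ?_ (by simp)
      refine (measure_biUnion_finset_le _ _).trans ?_
      rw [Finset.sum_eq_zero (fun S hS => hlow S (Finset.mem_filter.1 hS).1
        (Finset.mem_filter.1 hS).2)]
    have : volume (Metric.ball z r) = 0 := measure_mono_null hsublow hvol0
    exact absurd this (measure_ball_pos volume z hrpos).ne'
  -- canonical vertex tuples for `n`-dimensional members
  have hverts : ∀ P ∈ 𝒯, simplexDim P = n →
      AffineIndependent ℝ (vertsAux n P) ∧ P = convexHull ℝ (Set.range (vertsAux n P)) := by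
    intro P hP hd
    apply vertsAux_spec
    obtain ⟨k, v, hv, rfl⟩ := hsimp P hP
    have hk : k = n := by rwa [simplexDim_hull v hv] at hd
    subst hk
    exact ⟨v, hv, rfl⟩
  set Kb := 𝒯.filter (fun P => (P ∩ T).Nonempty ∧ simplexDim P = n) with hKb
  have hKsub : ∀ P ∈ Kb, P ∈ 𝒯 ∧ (P ∩ T).Nonempty ∧ simplexDim P = n := fun P hP => by
    rw [hKb, Finset.mem_filter] at hP
    exact ⟨hP.1, hP.2.1, hP.2.2⟩
  -- every neighbour of `T` is a face of an `n`-dimensional neighbour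
  have hstruct : ∀ S ∈ 𝒯, (S ∩ T).Nonempty → ∃ P, P ∈ Kb ∧
      ∃ t : Finset (Fin (n + 1)), S = convexHull ℝ (vertsAux n P '' ↑t) := by
    intro S hSmem hSint
    obtain ⟨k, v, hv, hSv⟩ := hsimp S hSmem
    set wb : Fin (k + 1) → ℝ := fun _ => ((k : ℝ) + 1)⁻¹ with hwb
    have hwbpos : ∀ i : Fin (k + 1), 0 < wb i := fun i => by rw [hwb]; positivity
    have hwb0 : ∀ i, 0 ≤ wb i := fun i => (hwbpos i).le
    have hwb1 : ∑ i, wb i = 1 := by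
      have hk0 : ((k : ℝ) + 1) ≠ 0 := by positivity
      rw [hwb]
      simp only [Finset.sum_const, Finset.card_univ, Fintype.card_fin, nsmul_eq_mul]
      push_cast
      exact mul_inv_cancel₀ hk0
    set b := ∑ i, wb i • v i with hbdef
    have hbS : b ∈ S := by
      rw [hSv]
      exact (mem_hull_range_iff v b).2 ⟨wb, hwb0, hwb1, rfl⟩
    have hbcl : b ∈ closure Ω := by
      rw [← hcover]
      exact Set.mem_biUnion hSmem hbS
    obtain ⟨P, hPmem, hPdim, hbP⟩ := hcoverN b hbcl
    have hSPne : S ∩ P ≠ ∅ := Set.nonempty_iff_ne_empty.1 ⟨b, hbS, hbP⟩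
    obtain ⟨hf1, hf2⟩ := (hinter S hSmem P hPmem).resolve_left hSPne
    obtain ⟨k₁, v₁, hv₁, hSv₁, s₁, hs₁ne, hfs₁⟩ := hf1
    have hext1 : IsExtreme ℝ S (S ∩ P) := by
      rw [hfs₁, hSv₁]
      exact face_isExtreme hv₁ s₁
    have hvmem : ∀ i, v i ∈ S ∩ P := by
      intro i
      refine pos_weight_mem_of_isExtreme (simplex_convex (hsimp S hSmem)) hext1 wb v hwb0 hwb1
        (fun j => hSv ▸ subset_convexHull ℝ _ (Set.mem_range_self j)) ?_ i (hwbpos i)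
      rw [← hbdef]
      exact ⟨hbS, hbP⟩
    have hSsubP : S ⊆ P := by
      rw [hSv]
      exact convexHull_min (fun y ⟨i, hiy⟩ => hiy ▸ (hvmem i).2)
        (simplex_convex (hsimp P hPmem))
    have hSPeq : S ∩ P = S := Set.inter_eq_left.2 hSsubP
    obtain ⟨k₂, v₂, hv₂, hPv₂, s₂, hs₂ne, hfs₂⟩ := hf2
    have hext2 : IsExtreme ℝ P S := by
      rw [← hSPeq, hfs₂, hPv₂]
      exact face_isExtreme hv₂ s₂
    obtain ⟨hwa, hwrep⟩ := hverts P hPmem hPdim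
    have hSrepr : S = convexHull ℝ (vertsAux n P '' {i | vertsAux n P i ∈ S}) := by
      refine isExtreme_eq_hull hwa ?_ ?_
      · rw [hSv]; exact convex_convexHull ℝ _
      · rw [← hwrep]; exact hext2
    refine ⟨P, ?_, Finset.univ.filter (fun i => vertsAux n P i ∈ S), ?_⟩
    · rw [hKb, Finset.mem_filter]
      obtain ⟨x, hx1, hx2⟩ := hSint
      exact ⟨hPmem, ⟨x, hSsubP hx1, hx2⟩, hPdim⟩
    · rw [show (↑(Finset.univ.filter (fun i => vertsAux n P i ∈ S)) : Set (Fin (n + 1)))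
          = {i | vertsAux n P i ∈ S} by ext i; simp]
      exact hSrepr
  -- counting the neighbours via the faces of `n`-dimensional neighbours
  have hcount : (𝒯.filter (fun S => (S ∩ T).Nonempty)).card ≤ Kb.card * 2 ^ (n + 1) := by
    set g : Set (Euc n) → Set (Euc n) × Finset (Fin (n + 1)) := fun S =>
      if hgS : ∃ P, P ∈ Kb ∧ ∃ t : Finset (Fin (n + 1)), S = convexHull ℝ (vertsAux n P '' ↑t)
      then (hgS.choose, hgS.choose_spec.2.choose) else (∅, ∅) with hg
    have hgspec : ∀ S ∈ 𝒯.filter (fun S => (S ∩ T).Nonempty),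
        (g S).1 ∈ Kb ∧ S = convexHull ℝ (vertsAux n (g S).1 '' ↑(g S).2) := by
      intro S hS
      rw [Finset.mem_filter] at hS
      have hex : ∃ P, P ∈ Kb ∧ ∃ t : Finset (Fin (n + 1)),
          S = convexHull ℝ (vertsAux n P '' ↑t) := hstruct S hS.1 hS.2
      rw [hg]
      simp only [dif_pos hex]
      exact ⟨hex.choose_spec.1, hex.choose_spec.2.choose_spec⟩
    have hinj := Finset.card_le_card_of_injOn g
      (fun S hS => Finset.mem_product.2 ⟨(hgspec S hS).1, Finset.mem_univ _⟩)
      (fun S hS S' hS' heq => by rw [(hgspec S hS).2, (hgspec S' hS').2, heq])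
    calc (𝒯.filter (fun S => (S ∩ T).Nonempty)).card
        ≤ (Kb ×ˢ (Finset.univ : Finset (Finset (Fin (n + 1))))).card := hinj
      _ = Kb.card * 2 ^ (n + 1) := by
          rw [Finset.card_product, Finset.card_univ, Fintype.card_finset, Fintype.card_fin]
  -- packing argument: bound the number of `n`-dimensional neighbours
  have hvolLB : ∀ P ∈ Kb, (h / C) ^ n / C ≤ (volume P).toReal := by
    intro P hP
    obtain ⟨hPm, hPint, hPdim⟩ := hKsub P hP
    have h1 : h / C ≤ meshSize 𝒯 P := by
      rw [div_le_iff₀ hC]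
      have := hms_loT P hPm hPint
      linarith [this]
    have h2 : (h / C) ^ n ≤ meshSize 𝒯 P ^ n := by
      apply pow_le_pow_left₀ (by positivity) h1
    have h3 := hshape1 P hPm hPdim
    rw [div_le_iff₀ hC, mul_comm ((volume P).toReal) C]
    exact h2.trans h3
  have hdisj : Set.Pairwise (↑Kb : Set (Set (Euc n)))
      (Function.onFun (MeasureTheory.AEDisjoint volume) (fun P => P)) := by
    intro S hS S' hS' hne
    have hSm := hKsub S (Finset.mem_coe.1 hS)
    have hS'm := hKsub S' (Finset.mem_coe.1 hS')
    rcases hinter S hSm.1 S' hS'm.1 with hemp | ⟨hf1, hf2⟩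
    · show volume (S ∩ S') = 0
      rw [hemp, measure_empty]
    · rcases face_vol_zero_or_eq hSm.2.2 hf1 with hv0 | heq1
      · exact hv0
      · rcases face_vol_zero_or_eq hS'm.2.2 hf2 with hv0 | heq2
        · exact hv0
        · exact absurd (heq1.symm.trans heq2) hne
  have hmeas : ∀ P ∈ Kb, NullMeasurableSet P volume := fun P hP =>
    (simplex_closed (hsimp P (hKsub P hP).1)).measurableSet.nullMeasurableSet
  have hsum : volume (⋃ P ∈ Kb, P) = ∑ P ∈ Kb, volume P :=
    measure_biUnion_finset₀ hdisj hmeas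
  have hfin : ∀ P ∈ Kb, volume P ≠ ⊤ := fun P hP =>
    (simplex_compact (hsimp P (hKsub P hP).1)).measure_lt_top.ne
  have hUsub : (⋃ P ∈ Kb, P) ⊆ Metric.closedBall t0 ((C + 1) * h) :=
    Set.iUnion₂_subset fun P hP => hsub_ball P (hKsub P hP).1 (hKsub P hP).2.1
  have hballvol : (volume (Metric.closedBall t0 ((C + 1) * h))).toReal = ((C + 1) * h) ^ n * B := by
    rw [Measure.addHaar_closedBall volume t0 (by positivity)]
    rw [ENNReal.toReal_mul, ENNReal.toReal_ofReal (by positivity), ← hB]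
    have hfr : Module.finrank ℝ (Euc n) = n := finrank_euclideanSpace_fin
    rw [hfr]
  have hKcard : (Kb.card : ℝ) * ((h / C) ^ n / C) ≤ ((C + 1) * h) ^ n * B := by
    have hstep1 : (Kb.card : ℝ) * ((h / C) ^ n / C) ≤ ∑ P ∈ Kb, (volume P).toReal := by
      have := Finset.card_nsmul_le_sum Kb (fun P => (volume P).toReal) ((h / C) ^ n / C) hvolLB
      simpa [nsmul_eq_mul] using this
    have hstep2 : ∑ P ∈ Kb, (volume P).toReal = (volume (⋃ P ∈ Kb, P)).toReal := by
      rw [← ENNReal.toReal_sum hfin, hsum]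
    have hstep3 : (volume (⋃ P ∈ Kb, P)).toReal ≤ ((C + 1) * h) ^ n * B := by
      rw [← hballvol]
      exact ENNReal.toReal_mono measure_closedBall_lt_top.ne (measure_mono hUsub)
    linarith
  have hKb_le : (Kb.card : ℝ) ≤ C ^ (n + 1) * (C + 1) ^ n * B := by
    have hhn : (0 : ℝ) < h ^ n := pow_pos hpos n
    have hCnC : (0 : ℝ) < C ^ n * C := by positivity
    have h4 : (Kb.card : ℝ) * h ^ n ≤ (C ^ (n + 1) * (C + 1) ^ n * B) * h ^ n := by
      have e : ((C + 1) * h) ^ n * B * (C ^ n * C) = (C ^ (n + 1) * (C + 1) ^ n * B) * h ^ n := by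
        rw [mul_pow, pow_succ]; ring
      rw [← e]
      calc (Kb.card : ℝ) * h ^ n
          = ((Kb.card : ℝ) * ((h / C) ^ n / C)) * (C ^ n * C) := by
            rw [div_pow]
            field_simp
        _ ≤ (((C + 1) * h) ^ n * B) * (C ^ n * C) :=
            mul_le_mul_of_nonneg_right hKcard hCnC.le
    exact le_of_mul_le_mul_right h4 hhn
  calc ((𝒯.filter (fun S => (S ∩ T).Nonempty)).card : ℝ)
      ≤ (Kb.card : ℝ) * 2 ^ (n + 1) := by exact_mod_cast hcount
    _ ≤ (C ^ (n + 1) * (C + 1) ^ n * B) * 2 ^ (n + 1) :=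
        mul_le_mul_of_nonneg_right hKb_le (by positivity)
    _ ≤ max 1 ((C ^ (n + 1) * (C + 1) ^ n * B) * 2 ^ (n + 1)) := le_max_right _ _

end
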